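/- For all positive integers Δ2 and ν there exists an integer N such that for every n ≥ N, every 3-multigraph H on n vertices with maximum codegree Δ2(H) ≤ Δ2 and matching number ν(H) ≤ ν satisfies e(H) ≤ f(n,ν,Δ2). -/

import Mathlib

/-- The function `g(ν, λ, s)` from the paper. -/
noncomputable def gfun (ν lam s : ℕ) : ℤ :=
  if ν ≤ 2 then 0
  else if (ν % 6 = 0 ∧ lam % 2 = 1) ∨
          (ν % 6 = 2 ∧ (lam % 6 = 1 ∨ lam % 6 = 3)) ∨
          (ν % 6 = 2 ∧ lam % 6 = 5 ∧ s < ν / 2) ∨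
          (ν % 6 = 4 ∧ lam % 2 = 1 ∧ s < ν / 2) then
    ⌊(lam : ℚ) / 3 * (ν.choose 2 : ℚ) - (ν : ℚ) / 6⌋
  else if (ν % 6 = 2 ∧ lam % 6 = 5 ∧ s = ν / 2) ∨
          (ν % 6 = 4 ∧ lam % 2 = 1 ∧ s = ν / 2) then
    ⌊(lam : ℚ) / 3 * (ν.choose 2 : ℚ) - (ν : ℚ) / 6⌋ - 1
  else if (ν % 6 = 2 ∧ lam % 6 = 4 ∧ s = 0) ∨
          (ν % 6 = 5 ∧ lam % 3 = 1 ∧ s = 0) then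
    ⌊(lam : ℚ) / 3 * (ν.choose 2 : ℚ)⌋ - 1
  else ⌊(lam : ℚ) / 3 * (ν.choose 2 : ℚ) - 2 * (s : ℚ) / 3⌋

/-- The function `f(n, ν, Δ₂)` from the paper. -/
noncomputable def ffun (n ν Δ : ℕ) : ℤ :=
  ⌊(ν : ℚ) * ((n : ℚ) - (ν : ℚ)) * (Δ : ℚ) / 2⌋ +
  if Even ((n - ν) * Δ) ∨ Even ν then gfun ν Δ 0 else gfun ν Δ (ν / 2)

/-- The codegree of a pair `p` of vertices in a 3-multigraph `H`: the number of
triples of `H` (with multiplicity) containing `p`. -/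
def codegPair {V : Type*} [DecidableEq V] (H : Multiset (Finset V)) (p : Finset V) : ℕ :=
  Multiset.card (H.filter fun t => p ⊆ t)

lemma two_choose_two (ν : ℕ) : 2 * ν.choose 2 = ν * (ν - 1) := by
  cases ν with
  | zero => simp
  | succ m =>
    rw [Nat.choose_two_right]
    have h2 : 2 ∣ (m + 1) * m := by
      rw [mul_comm]; exact (Nat.even_mul_succ_self m).two_dvd
    simp [Nat.mul_div_cancel' h2]

lemma floor_nat_div (a b : ℕ) : ⌊((a : ℚ)) / (b : ℚ)⌋ = ((a / b : ℕ) : ℤ) := by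
  rw [Rat.floor_natCast_div_natCast, Int.natCast_div]

-- floor of (lam/3 * C2 - ν/6)
lemma floor_g1 (ν lam : ℕ) (h : ν ≤ 2 * (lam * ν.choose 2)) :
    ⌊(lam : ℚ) / 3 * (ν.choose 2 : ℚ) - (ν : ℚ) / 6⌋
      = (((2 * (lam * ν.choose 2) - ν) / 6 : ℕ) : ℤ) := by
  rw [← floor_nat_div]
  congr 1
  have : ((2 * (lam * ν.choose 2) - ν : ℕ) : ℚ)
      = 2 * ((lam : ℚ) * (ν.choose 2 : ℚ)) - ν := by
    push_cast [h]; ring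
  rw [this]; ring

lemma floor_g2 (ν lam : ℕ) :
    ⌊(lam : ℚ) / 3 * (ν.choose 2 : ℚ)⌋ = (((lam * ν.choose 2) / 3 : ℕ) : ℤ) := by
  rw [← floor_nat_div]
  congr 1
  push_cast; ring

lemma floor_g3 (ν lam s : ℕ) (h : 2 * s ≤ lam * ν.choose 2) :
    ⌊(lam : ℚ) / 3 * (ν.choose 2 : ℚ) - 2 * (s : ℚ) / 3⌋
      = (((lam * ν.choose 2 - 2 * s) / 3 : ℕ) : ℤ) := by
  rw [← floor_nat_div]
  congr 1
  have : ((lam * ν.choose 2 - 2 * s : ℕ) : ℚ)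
      = (lam : ℚ) * (ν.choose 2 : ℚ) - 2 * s := by
    push_cast [h]; ring
  rw [this]; ring

lemma c_mod3_a {ν : ℕ} (c : ℕ) (h2 : ν % 6 = 2) (hc : 2 * c = ν * (ν - 1)) : c % 3 = 1 := by
  obtain ⟨k, rfl⟩ : ∃ k, ν = 6 * k + 2 := ⟨ν / 6, by omega⟩
  have h : 2 * c = 36 * (k * k) + 18 * k + 2 := by
    rw [hc]; have : (6 * k + 2) - 1 = 6 * k + 1 := by omega
    rw [this]; ring
  omega

lemma c_mod3_b {ν : ℕ} (c : ℕ) (h2 : ν % 6 = 5) (hc : 2 * c = ν * (ν - 1)) : c % 3 = 1 := by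
  obtain ⟨k, rfl⟩ : ∃ k, ν = 6 * k + 5 := ⟨ν / 6, by omega⟩
  have h : 2 * c = 36 * (k * k) + 54 * k + 20 := by
    rw [hc]; have : (6 * k + 5) - 1 = 6 * k + 4 := by omega
    rw [this]; ring
  omega

lemma Qmod3 {lam c Q : ℕ} (hl : lam % 3 = 1) (hcm : c % 3 = 1) (hQ : Q = lam * c) :
    Q % 3 = 1 := by
  subst hQ; rw [Nat.mul_mod, hl, hcm]

/-- The key arithmetic lemma. -/
lemma key (ν lam Q D T e s : ℕ) (hν : 1 ≤ ν) (hlam : 1 ≤ lam)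
    (hQ : Q = lam * ν.choose 2)
    (hid : 6 * e + D = 3 * T + 2 * Q)
    (hL1 : lam % 2 = 1 → ν % 2 = 0 → ν ≤ D)
    (hL2 : T % 2 = 1 → 2 * ν ≤ D)
    (hL3 : lam % 2 = 0 ∨ ν % 2 = 1 → D ≠ 2)
    (hsmall : ν = 2 → 2 * Q ≤ D)
    (hs : (T % 2 = 0 ∧ s = 0) ∨ (T % 2 = 1 ∧ s = ν / 2 ∧ ν % 2 = 1 ∧ lam % 2 = 1)) :
    (e : ℤ) ≤ ((T / 2 : ℕ) : ℤ) + gfun ν lam s := by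
  have hc2 : 2 * ν.choose 2 = ν * (ν - 1) := two_choose_two ν
  rcases le_or_gt ν 2 with hν2 | hν2
  · rw [gfun, if_pos hν2]
    interval_cases ν
    · have hQ0 : Q = 0 := by simp [hQ]
      rcases hs with ⟨hT, _⟩ | ⟨hT, _⟩
      · omega
      · have := hL2 hT; omega
    · have := hsmall rfl
      rcases hs with ⟨hT, _⟩ | ⟨hT, hsv, hodd, _⟩
      · omega
      · omega
  · have hν3 : ¬ ν ≤ 2 := by omega
    rw [gfun, if_neg hν3]
    have hQc : 2 * Q = lam * (ν * (ν - 1)) := by rw [hQ, ← hc2]; ring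
    have hνν : ν * 2 ≤ ν * (ν - 1) := Nat.mul_le_mul_left ν (by omega)
    have hν2Q : ν ≤ 2 * Q := by
      calc ν ≤ ν * (ν - 1) := by omega
        _ ≤ lam * (ν * (ν - 1)) := Nat.le_mul_of_pos_left _ hlam
        _ = 2 * Q := hQc.symm
    have hsν : 2 * s ≤ Q := by
      have h2s : 2 * s ≤ ν := by
        rcases hs with ⟨_, rfl⟩ | ⟨_, rfl, _⟩ <;> omega
      have hmul : ν * (ν - 1) ≤ lam * (ν * (ν - 1)) := Nat.le_mul_of_pos_left _ hlam
      omega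
    split_ifs with h1 h2 h3
    · have hνe : ν % 2 = 0 := by omega
      have hlo : lam % 2 = 1 := by omega
      have hD := hL1 hlo hνe
      have hT : T % 2 = 0 := by
        rcases hs with ⟨h, _⟩ | ⟨_, _, ho, _⟩ <;> omega
      rw [floor_g1 ν lam (by rw [← hQ]; omega)]
      have hQ2 : 2 * (lam * ν.choose 2) = 2 * Q := by rw [hQ]
      rw [hQ2]
      omega
    · exfalso
      have hνe : ν % 2 = 0 := by omega
      have hT : T % 2 = 0 := by
        rcases hs with ⟨h, _⟩ | ⟨_, _, ho, _⟩ <;> omega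
      have hs0 : s = 0 := by
        rcases hs with ⟨_, rfl⟩ | ⟨h, _⟩ <;> omega
      omega
    · have hs0 : s = 0 := by omega
      have hT : T % 2 = 0 := by
        rcases hs with ⟨h, _⟩ | ⟨hT1, hsv, ho, _⟩
        · exact h
        · exfalso; omega
      have hQm : Q % 3 = 1 := by
        rcases h3 with ⟨hν6, hl6, _⟩ | ⟨hν6, hl3, _⟩
        · exact Qmod3 (by omega) (c_mod3_a (ν.choose 2) hν6 hc2) hQ
        · exact Qmod3 hl3 (c_mod3_b (ν.choose 2) hν6 hc2) hQ
      have hD2 : D ≠ 2 := by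
        apply hL3
        rcases h3 with ⟨hν6, hl6, _⟩ | ⟨hν6, _, _⟩
        · left; omega
        · right; omega
      rw [floor_g2]
      have hQ2 : lam * ν.choose 2 = Q := hQ.symm
      rw [hQ2]
      omega
    · rw [floor_g3 ν lam s (by rw [← hQ]; exact hsν)]
      have hQ2 : lam * ν.choose 2 = Q := hQ.symm
      rw [hQ2]
      rcases hs with ⟨hT, rfl⟩ | ⟨hT, hsv, hνo, hlo⟩
      · omega
      · have hD := hL2 hT
        subst hsv
        omega

section Helpers
variable {α β : Type*}

lemma countP_eq_sum_map (H : Multiset β) (p : β → Prop) [DecidablePred p] :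
    H.countP p = (H.map (fun b => if p b then 1 else 0)).sum := by
  induction H using Multiset.induction with
  | empty => simp
  | cons t Hs ih =>
    simp only [Multiset.countP_cons, Multiset.map_cons, Multiset.sum_cons, ih]
    split_ifs <;> omega

lemma countP_smul (H : Multiset β) (p : β → Prop) [DecidablePred p] (k : ℕ) :
    k * H.countP p = (H.map (fun b => if p b then k else 0)).sum := by
  induction H using Multiset.induction with
  | empty => simp
  | cons t Hs ih =>
    simp only [Multiset.countP_cons, Multiset.map_cons, Multiset.sum_cons, ← ih]
    split_ifs <;> ring_nf <;> omega

lemma msum_add (H : Multiset β) (f g : β → ℕ) :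
    (H.map (fun b => f b + g b)).sum = (H.map f).sum + (H.map g).sum := by
  induction H using Multiset.induction with
  | empty => simp
  | cons t Hs ih =>
    simp only [Multiset.map_cons, Multiset.sum_cons, ih]; omega

lemma msum_mul (H : Multiset β) (f : β → ℕ) (k : ℕ) :
    k * (H.map f).sum = (H.map (fun b => k * f b)).sum := by
  induction H using Multiset.induction with
  | empty => simp
  | cons t Hs ih =>
    simp only [Multiset.map_cons, Multiset.sum_cons, ← ih]; ring

lemma countP_impl_le (H : Multiset β) (p q : β → Prop) [DecidablePred p] [DecidablePred q]
    (h : ∀ b ∈ H, p b → q b) : H.countP p ≤ H.countP q := by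
  induction H using Multiset.induction with
  | empty => simp
  | cons t Hs ih =>
    simp only [Multiset.countP_cons]
    have h1 := h t (Multiset.mem_cons_self t Hs)
    have h2 : Multiset.countP p Hs ≤ Multiset.countP q Hs :=
      ih (fun b hb => h b (Multiset.mem_cons_of_mem hb))
    split_ifs with hp hq hq <;> simp_all <;> omega

lemma finsum_countP_swap [DecidableEq α] (S : Finset α) (H : Multiset β)
    (p : α → β → Prop) [∀ a, DecidablePred (p a)] [∀ b, DecidablePred (fun a => p a b)] :
    ∑ a ∈ S, H.countP (p a) = (H.map (fun b => (S.filter (fun a => p a b)).card)).sum := by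
  induction H using Multiset.induction with
  | empty => simp
  | cons t Hs ih =>
    simp only [Multiset.countP_cons, Multiset.map_cons, Multiset.sum_cons,
      Finset.sum_add_distrib, ih, Finset.card_filter]
    omega

lemma finsum_msum_swap {α β : Type*} (S : Finset α) (H : Multiset β) (f : α → β → ℕ) :
    ∑ a ∈ S, (H.map (f a)).sum = (H.map (fun b => ∑ a ∈ S, f a b)).sum := by
  induction H using Multiset.induction with
  | empty => simp
  | cons t Hs ih => simp [Finset.sum_add_distrib, ih]

lemma map_sum_congr (H : Multiset β) (f g : β → ℕ) (h : ∀ b ∈ H, f b = g b) :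
    (H.map f).sum = (H.map g).sum := by
  rw [Multiset.map_congr rfl h]

end Helpers

section CaseA
variable {n : ℕ}

lemma codeg_eq_countP (H : Multiset (Finset (Fin n))) (x y : Fin n) :
    codegPair H {x, y} = H.countP (fun t => x ∈ t ∧ y ∈ t) := by
  rw [codegPair, ← Multiset.countP_eq_card_filter]
  exact Multiset.countP_congr rfl (fun t _ => by
    simp [Finset.insert_subset_iff])

lemma pair_sum_eq (H : Multiset (Finset (Fin n))) (h3 : ∀ t ∈ H, t.card = 3)
    (S : Finset (Fin n)) (w : Fin n) :
    ∑ u ∈ S, codegPair H {w, u}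
      = (H.map (fun t => if w ∈ t then (S ∩ t).card else 0)).sum := by
  have h1 : ∀ u, codegPair H {w, u} = H.countP (fun t => w ∈ t ∧ u ∈ t) :=
    codeg_eq_countP H w
  calc ∑ u ∈ S, codegPair H {w, u}
      = ∑ u ∈ S, H.countP (fun t => w ∈ t ∧ u ∈ t) :=
        Finset.sum_congr rfl (fun u _ => h1 u)
    _ = (H.map (fun t => (S.filter (fun u => w ∈ t ∧ u ∈ t)).card)).sum :=
        finsum_countP_swap S H _
    _ = _ := by
        apply map_sum_congr
        intro t _
        by_cases hwt : w ∈ t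
        · simp [hwt, Finset.filter_mem_eq_inter]
        · simp [hwt]

lemma caseA_counts (lam ν : ℕ) (hlam : 0 < lam) (hν : 0 < ν) (hνn : ν ≤ n)
    (H : Multiset (Finset (Fin n))) (h3 : ∀ t ∈ H, t.card = 3)
    (hcod : ∀ x y : Fin n, x ≠ y → codegPair H {x, y} ≤ lam)
    (W : Finset (Fin n)) (hW : W.card = ν)
    (hcover : ∀ t ∈ H, ∃ w ∈ W, w ∈ t) :
    ∃ D : ℕ,
      (6 * Multiset.card H + D = 3 * (lam * (ν * (n - ν))) + 2 * (lam * ν.choose 2)) ∧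
      (lam % 2 = 1 → ν % 2 = 0 → ν ≤ D) ∧
      ((lam * (ν * (n - ν))) % 2 = 1 → 2 * ν ≤ D) ∧
      (lam % 2 = 0 ∨ ν % 2 = 1 → D ≠ 2) ∧
      (ν = 2 → 2 * (lam * ν.choose 2) ≤ D) := by
  classical
  -- per-triple facts
  have hj1 : ∀ t ∈ H, 1 ≤ (W ∩ t).card := by
    intro t ht
    obtain ⟨w, hwW, hwt⟩ := hcover t ht
    exact Finset.card_pos.mpr ⟨w, Finset.mem_inter.mpr ⟨hwW, hwt⟩⟩
  have hj3 : ∀ t ∈ H, (W ∩ t).card ≤ 3 := by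
    intro t ht
    calc (W ∩ t).card ≤ t.card := Finset.card_le_card Finset.inter_subset_right
      _ = 3 := h3 t ht
  have hjW : ∀ t, (W ∩ t).card ≤ ν :=
    fun t => hW ▸ Finset.card_le_card Finset.inter_subset_left
  have hcardcompl : (Wᶜ : Finset (Fin n)).card = n - ν := by
    rw [Finset.card_compl, hW, Fintype.card_fin]
  have hsdiffcard : ∀ t ∈ H, (Wᶜ ∩ t).card = 3 - (W ∩ t).card := by
    intro t ht
    have h5 : Wᶜ ∩ t = t \ W := by
      ext u; simp [Finset.mem_sdiff, and_comm]
    rw [h5]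
    have h4 := Finset.card_inter_add_card_sdiff t W
    have h6 : (t ∩ W).card = (W ∩ t).card := by rw [Finset.inter_comm]
    have h7 := h3 t ht
    omega
  have herasecard : ∀ w, ∀ t, w ∈ t → ((W \ {w}) ∩ t).card
      = (W ∩ t).card - (if w ∈ W then 1 else 0) := by
    intro w t hwt
    have h5 : (W \ {w}) ∩ t = (W ∩ t) \ {w} := by
      ext u; simp [Finset.mem_sdiff]; tauto
    rw [h5]
    by_cases hwW : w ∈ W
    · rw [if_pos hwW, ← Finset.erase_eq,
        Finset.card_erase_of_mem (Finset.mem_inter.mpr ⟨hwW, hwt⟩)]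
    · rw [if_neg hwW]
      have : (W ∩ t) \ {w} = W ∩ t := by
        apply Finset.sdiff_eq_self_of_disjoint
        simp [Finset.disjoint_singleton_right, hwW]
      rw [this]; omega
  -- quantities
  set e2 : ℕ := H.countP (fun t => (W ∩ t).card = 2) with he2def
  set degv : Fin n → ℕ := fun v => H.countP (fun t => v ∈ t) with hdegvdef
  set bw : Fin n → ℕ := fun w => H.countP (fun t => w ∈ t ∧ (W ∩ t).card = 2) with hbwdef
  set cw : Fin n → ℕ := fun w => H.countP (fun t => w ∈ t ∧ (W ∩ t).card = 3) with hcwdef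
  set CW : Fin n → ℕ := fun w => ∑ u ∈ Wᶜ, codegPair H {w, u} with hCWdef
  set IW : Fin n → ℕ := fun w => ∑ u ∈ W \ {w}, codegPair H {w, u} with hIWdef
  -- computed forms
  have hCW : ∀ w, CW w = (H.map (fun t => if w ∈ t then 3 - (W ∩ t).card else 0)).sum := by
    intro w
    simp only [hCWdef]
    rw [pair_sum_eq H h3 Wᶜ w]
    apply map_sum_congr
    intro t ht
    by_cases hwt : w ∈ t
    · simp only [if_pos hwt, hsdiffcard t ht]
    · simp [hwt]
  have hIW : ∀ w ∈ W, IW w = (H.map (fun t => if w ∈ t then (W ∩ t).card - 1 else 0)).sum := by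
    intro w hw
    simp only [hIWdef]
    rw [pair_sum_eq H h3 (W \ {w}) w]
    apply map_sum_congr
    intro t ht
    by_cases hwt : w ∈ t
    · simp only [if_pos hwt, herasecard w t hwt, if_pos hw]
    · simp [hwt]
  -- per-vertex identities
  have hPV1 : ∀ w ∈ W, CW w + IW w = 2 * degv w := by
    intro w hw
    rw [hCW w, hIW w hw]
    simp only [hdegvdef]
    rw [← msum_add]
    rw [countP_smul]
    apply map_sum_congr
    intro t ht
    by_cases hwt : w ∈ t
    · simp only [if_pos hwt]
      have := hj1 t ht; have := hj3 t ht
      omega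
    · simp [hwt]
  have hPV2 : ∀ w ∈ W, IW w = bw w + 2 * cw w := by
    intro w hw
    rw [hIW w hw]
    simp only [hbwdef, hcwdef]
    rw [countP_eq_sum_map, countP_smul, ← msum_add]
    apply map_sum_congr
    intro t ht
    by_cases hwt : w ∈ t
    · simp only [if_pos hwt, hwt, true_and]
      have := hj1 t ht; have := hj3 t ht
      split_ifs <;> omega
    · simp [hwt]
  -- bounds
  have hCWle : ∀ w ∈ W, CW w ≤ lam * (n - ν) := by
    intro w hw
    simp only [hCWdef]
    calc ∑ u ∈ Wᶜ, codegPair H {w, u} ≤ ∑ _u ∈ Wᶜ, lam := by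
          apply Finset.sum_le_sum
          intro u hu
          apply hcod
          intro hwu
          rw [hwu] at hw
          exact (Finset.mem_compl.mp hu) hw
      _ = (n - ν) * lam := by rw [Finset.sum_const, hcardcompl, smul_eq_mul]
      _ = lam * (n - ν) := mul_comm _ _
  have hIWle : ∀ w ∈ W, IW w ≤ lam * (ν - 1) := by
    intro w hw
    simp only [hIWdef]
    calc ∑ u ∈ W \ {w}, codegPair H {w, u} ≤ ∑ _u ∈ W \ {w}, lam := by
          apply Finset.sum_le_sum
          intro u hu
          apply hcod
          intro hwu
          rw [hwu] at hu
          simp at hu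
      _ = (ν - 1) * lam := by
          rw [Finset.sum_const, smul_eq_mul, ← Finset.erase_eq,
            Finset.card_erase_of_mem hw, hW]
      _ = lam * (ν - 1) := mul_comm _ _
  -- global identities
  have hXmap : ∑ w ∈ W, CW w
      = (H.map (fun t => (W ∩ t).card * (3 - (W ∩ t).card))).sum := by
    calc ∑ w ∈ W, CW w
        = ∑ w ∈ W, (H.map (fun t => if w ∈ t then 3 - (W ∩ t).card else 0)).sum :=
          Finset.sum_congr rfl (fun w _ => hCW w)
      _ = (H.map (fun t => ∑ w ∈ W, if w ∈ t then 3 - (W ∩ t).card else 0)).sum :=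
          finsum_msum_swap W H _
      _ = _ := by
          apply map_sum_congr
          intro t _
          rw [Finset.sum_ite_mem, Finset.sum_const, smul_eq_mul]
  have hYmap : ∑ w ∈ W, IW w
      = (H.map (fun t => (W ∩ t).card * ((W ∩ t).card - 1))).sum := by
    calc ∑ w ∈ W, IW w
        = ∑ w ∈ W, (H.map (fun t => if w ∈ t then (W ∩ t).card - 1 else 0)).sum :=
          Finset.sum_congr rfl (fun w hw => hIW w hw)
      _ = (H.map (fun t => ∑ w ∈ W, if w ∈ t then (W ∩ t).card - 1 else 0)).sum :=
          finsum_msum_swap W H _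
      _ = _ := by
          apply map_sum_congr
          intro t _
          rw [Finset.sum_ite_mem, Finset.sum_const, smul_eq_mul]
  have hbsum : ∑ w ∈ W, bw w = 2 * e2 := by
    rw [he2def, countP_smul]
    simp only [hbwdef]
    calc ∑ w ∈ W, Multiset.countP (fun t => w ∈ t ∧ (W ∩ t).card = 2) H
        = (H.map (fun t => (W.filter (fun w => w ∈ t ∧ (W ∩ t).card = 2)).card)).sum :=
          finsum_countP_swap W H _
      _ = _ := by
          apply map_sum_congr
          intro t _
          by_cases hj : (W ∩ t).card = 2
          · simp [hj, Finset.filter_mem_eq_inter]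
          · simp [hj]
  -- slacks
  set sw : Fin n → ℕ := fun w => lam * (n - ν) - CW w with hswdef
  set dw : Fin n → ℕ := fun w => lam * (ν - 1) - IW w with hdwdef
  set Sc : ℕ := ∑ w ∈ W, sw w with hScdef
  set SI : ℕ := ∑ w ∈ W, dw w with hSIdef
  have hXS : (∑ w ∈ W, CW w) + Sc = ν * (lam * (n - ν)) := by
    rw [hScdef, ← Finset.sum_add_distrib]
    calc ∑ w ∈ W, (CW w + sw w) = ∑ _w ∈ W, lam * (n - ν) := by
          apply Finset.sum_congr rfl
          intro w hw
          have h1 := hCWle w hw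
          have h2 : sw w = lam * (n - ν) - CW w := rfl
          omega
      _ = ν * (lam * (n - ν)) := by rw [Finset.sum_const, smul_eq_mul, hW]
  have hYS : (∑ w ∈ W, IW w) + SI = ν * (lam * (ν - 1)) := by
    rw [hSIdef, ← Finset.sum_add_distrib]
    calc ∑ w ∈ W, (IW w + dw w) = ∑ _w ∈ W, lam * (ν - 1) := by
          apply Finset.sum_congr rfl
          intro w hw
          have h1 := hIWle w hw
          have h2 : dw w = lam * (ν - 1) - IW w := rfl
          omega
      _ = ν * (lam * (ν - 1)) := by rw [Finset.sum_const, smul_eq_mul, hW]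
  have hmaster : 3 * (∑ w ∈ W, CW w) + (∑ w ∈ W, IW w)
      = 6 * Multiset.card H + 2 * e2 := by
    rw [hXmap, hYmap, msum_mul, ← msum_add]
    have hcardH : 6 * Multiset.card H = (H.map (fun _ => 6)).sum := by
      induction H using Multiset.induction with
      | empty => simp
      | cons t Hs ih => simp [Multiset.sum_cons] at ih ⊢; omega
    rw [hcardH, he2def, countP_smul, ← msum_add]
    apply map_sum_congr
    intro t ht
    have h1 := hj1 t ht
    have h2 := hj3 t ht
    set k := (W ∩ t).card with hk
    have hcases : k = 1 ∨ k = 2 ∨ k = 3 := by omega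
    rcases hcases with h|h|h <;> rw [h] <;> norm_num
  have h2Q : 2 * (lam * ν.choose 2) = ν * (lam * (ν - 1)) := by
    rw [show 2 * (lam * ν.choose 2) = lam * (2 * ν.choose 2) by ring, two_choose_two]
    ring
  have hTring : lam * (ν * (n - ν)) = ν * (lam * (n - ν)) := by ring
  refine ⟨3 * Sc + SI + 2 * e2, by omega, ?_, ?_, ?_, ?_⟩
  · -- hL1
    intro hlo hνe
    have hoddm : (lam * (ν - 1)) % 2 = 1 := by
      rw [← Nat.odd_iff, Nat.odd_mul]
      constructor
      · exact Nat.odd_iff.mpr hlo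
      · exact Nat.odd_iff.mpr (by omega)
    have hper : ∀ w ∈ W, 1 ≤ dw w + bw w := by
      intro w hw
      have e1 := hPV2 w hw
      have e4 := hIWle w hw
      have e6 : dw w = lam * (ν - 1) - IW w := rfl
      omega
    have hsum := Finset.card_nsmul_le_sum W (fun w => dw w + bw w) 1 hper
    rw [Finset.sum_add_distrib, hbsum, hW, smul_eq_mul] at hsum
    omega
  · -- hL2
    intro hTodd
    have hno2 : ¬ Even (lam * (ν * (n - ν))) := by
      rw [Nat.even_iff]; omega
    rw [Nat.even_mul, Nat.even_mul] at hno2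
    push_neg at hno2
    have hlodd := hno2.1
    have hνodd := hno2.2.1
    have hnνodd := hno2.2.2
    have hp1 : (lam * (n - ν)) % 2 = 1 := by
      rw [← Nat.odd_iff, Nat.odd_mul]
      exact ⟨Nat.not_even_iff_odd.mp hlodd, Nat.not_even_iff_odd.mp hnνodd⟩
    have hp2 : (lam * (ν - 1)) % 2 = 0 := by
      rw [← Nat.even_iff]
      apply Even.mul_left
      have : ν % 2 = 1 := Nat.odd_iff.mp (Nat.not_even_iff_odd.mp hνodd)
      exact Nat.even_iff.mpr (by omega)
    have hper : ∀ w ∈ W, 2 ≤ 3 * sw w + (dw w + bw w) := by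
      intro w hw
      have e1 := hPV1 w hw
      have e2' := hPV2 w hw
      have e3 := hCWle w hw
      have e4 := hIWle w hw
      have e5 : sw w = lam * (n - ν) - CW w := rfl
      have e6 : dw w = lam * (ν - 1) - IW w := rfl
      omega
    have hsum := Finset.card_nsmul_le_sum W (fun w => 3 * sw w + (dw w + bw w)) 2 hper
    rw [Finset.sum_add_distrib, Finset.sum_add_distrib, hbsum, hW, smul_eq_mul,
      ← Finset.mul_sum] at hsum
    omega
  · -- hL3
    intro hpar hD2
    have hevenm : (lam * (ν - 1)) % 2 = 0 := by
      rw [← Nat.even_iff]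
      rcases hpar with h | h
      · exact (Nat.even_iff.mpr h).mul_right _
      · exact Even.mul_left (Nat.even_iff.mpr (by omega)) _
    have hSc0 : Sc = 0 := by omega
    have hcase : (e2 = 1 ∧ SI = 0) ∨ (e2 = 0 ∧ SI = 2) := by omega
    have hdwentry : ∀ w ∈ W, dw w = ∑ u ∈ W \ {w}, (lam - codegPair H {w, u}) := by
      intro w hw
      have hsub : ∀ u ∈ W \ {w}, codegPair H {w, u} ≤ lam := by
        intro u hu
        apply hcod
        intro h
        rw [h] at hu
        simp at hu
      rw [Finset.sum_tsub_distrib _ hsub]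
      have hc : ∑ _u ∈ W \ {w}, lam = lam * (ν - 1) := by
        rw [Finset.sum_const, smul_eq_mul, ← Finset.erase_eq,
          Finset.card_erase_of_mem hw, hW, mul_comm]
      rw [hc]
    rcases hcase with ⟨h1, h0⟩ | ⟨h1, h0⟩
    · -- e2 = 1, SI = 0
      have hdw0 : ∀ w ∈ W, dw w = 0 := by
        intro w hw
        exact Finset.sum_eq_zero_iff.mp h0 w hw
      have hbs : ∑ w ∈ W, bw w = 2 := by rw [hbsum, h1]
      have hex : ∃ w ∈ W, 1 ≤ bw w := by
        by_contra hc
        push_neg at hc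
        have hz : ∑ w ∈ W, bw w = 0 :=
          Finset.sum_eq_zero (fun w hw => by have := hc w hw; omega)
        omega
      obtain ⟨w0, hw0, hb1⟩ := hex
      have e1 := hPV2 w0 hw0
      have e4 := hIWle w0 hw0
      have e6 : dw w0 = lam * (ν - 1) - IW w0 := rfl
      have hble : bw w0 ≤ e2 := by
        rw [he2def]
        simp only [hbwdef]
        exact countP_impl_le H _ _ (fun t _ h => h.2)
      have := hdw0 w0 hw0
      omega
    · -- e2 = 0, SI = 2
      have hbw0 : ∀ w ∈ W, bw w = 0 := by
        intro w hw
        have h2' : ∑ w ∈ W, bw w = 0 := by rw [hbsum, h1]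
        exact Finset.sum_eq_zero_iff.mp h2' w hw
      have hdweven : ∀ w ∈ W, dw w % 2 = 0 := by
        intro w hw
        have e1 := hPV2 w hw
        have e4 := hIWle w hw
        have e6 : dw w = lam * (ν - 1) - IW w := rfl
        have := hbw0 w hw
        omega
      have hex : ∃ w ∈ W, 1 ≤ dw w := by
        by_contra hc
        push_neg at hc
        have hz : ∑ w ∈ W, dw w = 0 :=
          Finset.sum_eq_zero (fun w hw => by have := hc w hw; omega)
        omega
      obtain ⟨w0, hw0, hd1⟩ := hex
      have hd2 : 2 ≤ dw w0 := by have := hdweven w0 hw0; omega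
      have hterm : ∃ u ∈ W \ {w0}, 1 ≤ lam - codegPair H {w0, u} := by
        by_contra hc
        push_neg at hc
        have hz : dw w0 = 0 := by
          rw [hdwentry w0 hw0]
          exact Finset.sum_eq_zero (fun u hu => by have := hc u hu; omega)
        omega
      obtain ⟨u0, hu0, ht1⟩ := hterm
      have hu0W : u0 ∈ W := (Finset.mem_sdiff.mp hu0).1
      have hne : u0 ≠ w0 := by
        have := (Finset.mem_sdiff.mp hu0).2
        simp at this
        exact this
      have hd3 : 1 ≤ dw u0 := by
        rw [hdwentry u0 hu0W]
        have hw0mem : w0 ∈ W \ {u0} :=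
          Finset.mem_sdiff.mpr ⟨hw0, by simp [(Ne.symm hne)]⟩
        calc 1 ≤ lam - codegPair H {u0, w0} := by rw [Finset.pair_comm]; exact ht1
          _ ≤ ∑ u ∈ W \ {u0}, (lam - codegPair H {u0, u}) :=
            Finset.single_le_sum (f := fun u => lam - codegPair H {u0, u})
              (fun u _ => Nat.zero_le _) hw0mem
      have hpairsum : dw w0 + dw u0 ≤ SI := by
        have hsub : ({w0, u0} : Finset (Fin n)) ⊆ W := by
          intro x hx
          simp at hx
          rcases hx with rfl | rfl
          · exact hw0
          · exact hu0W
        calc dw w0 + dw u0 = ∑ w ∈ ({w0, u0} : Finset (Fin n)), dw w :=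
              (Finset.sum_pair (Ne.symm hne)).symm
          _ ≤ SI := Finset.sum_le_sum_of_subset hsub
      omega
  · -- hsmall
    intro h2
    have hj2 : ∀ t ∈ H, (W ∩ t).card ≤ 2 := fun t _ => h2 ▸ hjW t
    have hYe : ∑ w ∈ W, IW w = 2 * e2 := by
      rw [hYmap, he2def, countP_smul]
      apply map_sum_congr
      intro t ht
      have ha := hj1 t ht
      have hb := hj2 t ht
      set k := (W ∩ t).card with hk
      have hcases : k = 1 ∨ k = 2 := by omega
      rcases hcases with h|h <;> rw [h] <;> norm_num
    have hlp : ν * (lam * (ν - 1)) = 2 * lam := by rw [h2]; ring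
    have hch : 2 * (lam * ν.choose 2) = 2 * lam := by
      rw [h2, Nat.choose_self]; ring
    omega

lemma caseA (lam ν : ℕ) (hlam : 0 < lam) (hν : 0 < ν) (hνn : ν ≤ n)
    (H : Multiset (Finset (Fin n))) (h3 : ∀ t ∈ H, t.card = 3)
    (hcod : ∀ x y : Fin n, x ≠ y → codegPair H {x, y} ≤ lam)
    (W : Finset (Fin n)) (hW : W.card = ν)
    (hcover : ∀ t ∈ H, ∃ w ∈ W, w ∈ t) :
    (Multiset.card H : ℤ) ≤ ffun n ν lam := by
  obtain ⟨D, hid, hL1, hL2, hL3, hsmall⟩ :=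
    caseA_counts lam ν hlam hν hνn H h3 hcod W hW hcover
  have hfloor : ⌊(ν : ℚ) * ((n : ℚ) - (ν : ℚ)) * (lam : ℚ) / 2⌋
      = (((lam * (ν * (n - ν))) / 2 : ℕ) : ℤ) := by
    rw [← floor_nat_div]
    congr 1
    have h : ((lam * (ν * (n - ν)) : ℕ) : ℚ) = (ν : ℚ) * ((n : ℚ) - (ν : ℚ)) * (lam : ℚ) := by
      push_cast [Nat.cast_sub hνn]
      ring
    rw [h]
    norm_num
  have hEv : (Even ((n - ν) * lam) ∨ Even ν) ↔ Even (lam * (ν * (n - ν))) := by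
    simp only [Nat.even_mul]
    tauto
  rw [ffun]
  split_ifs with hcond
  · rw [hfloor]
    exact key ν lam (lam * ν.choose 2) D (lam * (ν * (n - ν))) (Multiset.card H) 0
      hν hlam rfl hid hL1 hL2 hL3 hsmall
      (Or.inl ⟨Nat.even_iff.mp (hEv.mp hcond), rfl⟩)
  · rw [hfloor]
    have hT1 : (lam * (ν * (n - ν))) % 2 = 1 := by
      have h1 : ¬ Even (lam * (ν * (n - ν))) := fun h => hcond (hEv.mpr h)
      rw [Nat.even_iff] at h1
      omega
    have hν1 : ν % 2 = 1 := by
      have h1 : ¬ Even ν := fun h => hcond (Or.inr h)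
      rw [Nat.even_iff] at h1
      omega
    have hl1 : lam % 2 = 1 := by
      have h1 : ¬ Even ((n - ν) * lam) := fun h => hcond (Or.inl h)
      rw [Nat.even_mul] at h1
      push_neg at h1
      have := h1.2
      rw [Nat.even_iff] at this
      omega
    exact key ν lam (lam * ν.choose 2) D (lam * (ν * (n - ν))) (Multiset.card H) (ν / 2)
      hν hlam rfl hid hL1 hL2 hL3 hsmall
      (Or.inr ⟨hT1, rfl, hν1, hl1⟩)

section CaseB
variable {n : ℕ}

lemma countP_or_le {β : Type*} (H : Multiset β) (p q : β → Prop)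
    [DecidablePred p] [DecidablePred q] :
    H.countP (fun b => p b ∨ q b) ≤ H.countP p + H.countP q := by
  induction H using Multiset.induction with
  | empty => simp
  | cons t Hs ih =>
    simp only [Multiset.countP_cons]
    split_ifs <;> simp_all <;> omega

lemma countP_exists_le {α β : Type*} [DecidableEq α] (H : Multiset β) (A : Finset α)
    (p : α → β → Prop) [∀ a, DecidablePred (p a)] :
    H.countP (fun b => ∃ a ∈ A, p a b) ≤ ∑ a ∈ A, H.countP (p a) := by
  classical
  induction A using Finset.induction with
  | empty => simp
  | @insert a A ha ih =>
    have h1 : H.countP (fun b => ∃ x ∈ insert a A, p x b)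
        ≤ H.countP (fun b => p a b ∨ ∃ x ∈ A, p x b) := by
      apply countP_impl_le
      intro b _ hb
      obtain ⟨x, hx, hpx⟩ := hb
      rcases Finset.mem_insert.mp hx with rfl | hxA
      · exact Or.inl hpx
      · exact Or.inr ⟨x, hxA, hpx⟩
    calc H.countP (fun b => ∃ x ∈ insert a A, p x b)
        ≤ H.countP (fun b => p a b ∨ ∃ x ∈ A, p x b) := h1
      _ ≤ H.countP (p a) + H.countP (fun b => ∃ x ∈ A, p x b) := countP_or_le H _ _
      _ ≤ H.countP (p a) + ∑ x ∈ A, H.countP (p x) := by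
          have := ih
          omega
      _ = ∑ x ∈ insert a A, H.countP (p x) :=
          (Finset.sum_insert (f := fun x => H.countP (p x)) ha).symm

lemma deg_double (lam : ℕ) (H : Multiset (Finset (Fin n)))
    (h3 : ∀ t ∈ H, t.card = 3)
    (hcod : ∀ x y : Fin n, x ≠ y → codegPair H {x, y} ≤ lam) (v : Fin n) :
    2 * H.countP (fun t => v ∈ t) ≤ lam * (n - 1) := by
  classical
  have h2 : ∑ u ∈ ({v}ᶜ : Finset (Fin n)), codegPair H {v, u}
      = 2 * H.countP (fun t => v ∈ t) := by
    rw [pair_sum_eq H h3 _ v, countP_smul]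
    apply map_sum_congr
    intro t ht
    by_cases hv : v ∈ t
    · simp only [if_pos hv]
      have he : ({v}ᶜ : Finset (Fin n)) ∩ t = t.erase v := by
        ext u
        simp [Finset.mem_erase, and_comm]
      rw [he, Finset.card_erase_of_mem hv, h3 t ht]
    · simp [hv]
  rw [← h2]
  calc ∑ u ∈ ({v}ᶜ : Finset (Fin n)), codegPair H {v, u}
      ≤ ∑ _u ∈ ({v}ᶜ : Finset (Fin n)), lam := by
        apply Finset.sum_le_sum
        intro u hu
        apply hcod
        intro hvu
        rw [hvu] at hu
        simp at hu
    _ = lam * (n - 1) := by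
        rw [Finset.sum_const, smul_eq_mul, Finset.card_compl,
          Finset.card_singleton, Fintype.card_fin, mul_comm]

lemma exists_triple (lam : ℕ) (H : Multiset (Finset (Fin n)))
    (hcod : ∀ x y : Fin n, x ≠ y → codegPair H {x, y} ≤ lam)
    (w : Fin n) (F : Finset (Fin n)) (hwF : w ∉ F)
    (hdeg : lam * F.card < H.countP (fun t => w ∈ t)) :
    ∃ t, t ∈ H ∧ w ∈ t ∧ Disjoint t F := by
  classical
  by_contra hc
  push_neg at hc
  have h1 : H.countP (fun t => w ∈ t) ≤ H.countP (fun t => ∃ f ∈ F, w ∈ t ∧ f ∈ t) := by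
    apply countP_impl_le
    intro t ht hw
    have hnd := hc t ht hw
    obtain ⟨a, hat, haF⟩ := Finset.not_disjoint_iff.mp hnd
    exact ⟨a, haF, hw, hat⟩
  have h2 : H.countP (fun t => ∃ f ∈ F, w ∈ t ∧ f ∈ t)
      ≤ ∑ f ∈ F, H.countP (fun t => w ∈ t ∧ f ∈ t) :=
    by convert countP_exists_le H F (fun f t => w ∈ t ∧ f ∈ t)
  have h3' : ∀ f ∈ F, H.countP (fun t => w ∈ t ∧ f ∈ t) ≤ lam := by
    intro f hf
    rw [← codeg_eq_countP]
    apply hcod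
    intro h
    rw [h] at hwF
    exact hwF hf
  have h4 : ∑ f ∈ F, H.countP (fun t => w ∈ t ∧ f ∈ t) ≤ lam * F.card := by
    calc ∑ f ∈ F, H.countP (fun t => w ∈ t ∧ f ∈ t) ≤ ∑ _f ∈ F, lam :=
          Finset.sum_le_sum h3'
      _ = lam * F.card := by rw [Finset.sum_const, smul_eq_mul, mul_comm]
  omega

lemma greedy (lam : ℕ) (H : Multiset (Finset (Fin n)))
    (h3 : ∀ t ∈ H, t.card = 3)
    (hcod : ∀ x y : Fin n, x ≠ y → codegPair H {x, y} ≤ lam)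
    (S : Finset (Fin n)) :
    ∀ (M0 : Finset (Finset (Fin n))),
      (∀ t ∈ M0, t ∈ H) →
      (∀ t ∈ M0, ∀ t' ∈ M0, t ≠ t' → Disjoint t t') →
      (∀ t ∈ M0, Disjoint t S) →
      (∀ w ∈ S, lam * (3 * M0.card + 4 * S.card) < H.countP (fun t => w ∈ t)) →
      ∃ M : Finset (Finset (Fin n)), (∀ t ∈ M, t ∈ H) ∧
        (∀ t ∈ M, ∀ t' ∈ M, t ≠ t' → Disjoint t t') ∧ M.card = M0.card + S.card := by
  classical
  induction S using Finset.induction with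
  | empty =>
    intro M0 h1 h2 _ _
    exact ⟨M0, h1, h2, by simp⟩
  | @insert w S' hwS ih =>
    intro M0 hM0H hM0d hM0S hdeg
    set F := (M0.biUnion id) ∪ S' with hFdef
    have hwFnot : w ∉ F := by
      simp only [hFdef, Finset.mem_union, Finset.mem_biUnion, id_eq]
      push_neg
      constructor
      · intro t htM
        have := hM0S t htM
        rw [Finset.disjoint_right] at this
        exact fun hw => this (Finset.mem_insert_self w S') hw
      · exact hwS
    have hFcard : F.card ≤ 3 * M0.card + S'.card := by
      calc F.card ≤ (M0.biUnion id).card + S'.card := Finset.card_union_le _ _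
        _ ≤ (∑ t ∈ M0, t.card) + S'.card := by
            have h := Finset.card_biUnion_le (s := M0) (t := id)
            simp only [id_eq] at h
            omega
        _ ≤ 3 * M0.card + S'.card := by
            have he : ∑ t ∈ M0, t.card = ∑ _t ∈ M0, 3 :=
              Finset.sum_congr rfl (fun t ht => h3 t (hM0H t ht))
            rw [he, Finset.sum_const, smul_eq_mul] at *
            omega
    obtain ⟨t0, ht0H, hwt0, ht0F⟩ := exists_triple lam H hcod w F hwFnot (by
      have hd := hdeg w (Finset.mem_insert_self w S')
      have hc : F.card ≤ 3 * M0.card + 4 * (insert w S').card := by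
        rw [Finset.card_insert_of_notMem hwS]
        omega
      calc lam * F.card ≤ lam * (3 * M0.card + 4 * (insert w S').card) :=
            Nat.mul_le_mul_left lam hc
        _ < _ := hd)
    have ht0M0 : t0 ∉ M0 := by
      intro hmem
      have hwV : w ∈ M0.biUnion id := Finset.mem_biUnion.mpr ⟨t0, hmem, hwt0⟩
      exact hwFnot (Finset.mem_union_left _ hwV)
    have hdisj0 : ∀ t ∈ M0, Disjoint t0 t := by
      intro t htM
      have hsub : t ⊆ F := fun x hx =>
        Finset.mem_union_left _ (Finset.mem_biUnion.mpr ⟨t, htM, hx⟩)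
      exact Finset.disjoint_of_subset_right hsub ht0F
    obtain ⟨M, hMH, hMd, hMcard⟩ := ih (insert t0 M0)
      (by
        intro t ht
        rcases Finset.mem_insert.mp ht with rfl | htM
        · exact ht0H
        · exact hM0H t htM)
      (by
        intro t ht t' ht' hne
        rcases Finset.mem_insert.mp ht with rfl | htM <;>
          rcases Finset.mem_insert.mp ht' with rfl | htM'
        · exact absurd rfl hne
        · exact hdisj0 t' htM'
        · exact (hdisj0 t htM).symm
        · exact hM0d t htM t' htM' hne)
      (by
        intro t ht
        rcases Finset.mem_insert.mp ht with rfl | htM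
        · exact Finset.disjoint_of_subset_right (Finset.subset_union_right) ht0F
        · exact Finset.disjoint_of_subset_right (Finset.subset_insert w S') (hM0S t htM))
      (by
        intro w' hw'
        have hd := hdeg w' (Finset.mem_insert_of_mem hw')
        have hcards : (insert t0 M0).card = M0.card + 1 :=
          Finset.card_insert_of_notMem ht0M0
        have hcards2 : (insert w S').card = S'.card + 1 :=
          Finset.card_insert_of_notMem hwS
        have hmono : 3 * (insert t0 M0).card + 4 * S'.card
            ≤ 3 * M0.card + 4 * (insert w S').card := by omega
        calc lam * (3 * (insert t0 M0).card + 4 * S'.card)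
            ≤ lam * (3 * M0.card + 4 * (insert w S').card) := Nat.mul_le_mul_left lam hmono
          _ < _ := hd)
    refine ⟨M, hMH, hMd, ?_⟩
    rw [hMcard, Finset.card_insert_of_notMem ht0M0, Finset.card_insert_of_notMem hwS]
    omega

end CaseB

lemma gfun_lb (ν lam s : ℕ) (hs : s ≤ ν) : -(ν : ℤ) - 1 ≤ gfun ν lam s := by
  have hC : (0 : ℚ) ≤ (lam : ℚ) / 3 * (ν.choose 2 : ℚ) := by positivity
  have hν0 : (0 : ℚ) ≤ (ν : ℚ) := by positivity
  rw [gfun]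
  split_ifs with h1 h2 h3 h4
  · omega
  · have : (-(ν : ℤ) - 1 : ℤ) ≤ ⌊(lam : ℚ) / 3 * (ν.choose 2 : ℚ) - (ν : ℚ) / 6⌋ := by
      apply Int.le_floor.mpr
      push_cast
      nlinarith
    omega
  · have : (-(ν : ℤ) : ℤ) ≤ ⌊(lam : ℚ) / 3 * (ν.choose 2 : ℚ) - (ν : ℚ) / 6⌋ := by
      apply Int.le_floor.mpr
      push_cast
      nlinarith
    omega
  · have : (0 : ℤ) ≤ ⌊(lam : ℚ) / 3 * (ν.choose 2 : ℚ)⌋ := by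
      apply Int.le_floor.mpr
      push_cast
      nlinarith
    omega
  · have : (-(ν : ℤ) - 1 : ℤ) ≤ ⌊(lam : ℚ) / 3 * (ν.choose 2 : ℚ) - 2 * (s : ℚ) / 3⌋ := by
      apply Int.le_floor.mpr
      have hsq : (s : ℚ) ≤ (ν : ℚ) := by exact_mod_cast hs
      push_cast
      nlinarith
    omega

lemma ffun_lb (n ν lam : ℕ) (hνn : ν ≤ n) :
    6 * ((lam : ℤ) * (ν * (n - ν : ℕ))) ≤ 12 * ffun n ν lam + 12 * ν + 18 := by
  have hfloor : ⌊(ν : ℚ) * ((n : ℚ) - (ν : ℚ)) * (lam : ℚ) / 2⌋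
      = (((lam * (ν * (n - ν))) / 2 : ℕ) : ℤ) := by
    rw [← floor_nat_div]
    congr 1
    have h : ((lam * (ν * (n - ν)) : ℕ) : ℚ) = (ν : ℚ) * ((n : ℚ) - (ν : ℚ)) * (lam : ℚ) := by
      push_cast [Nat.cast_sub hνn]
      ring
    rw [h]
    norm_num
  have hg : -(ν : ℤ) - 1 ≤ (if Even ((n - ν) * lam) ∨ Even ν then gfun ν lam 0
      else gfun ν lam (ν / 2)) := by
    split_ifs
    · exact gfun_lb ν lam 0 (Nat.zero_le _)
    · exact gfun_lb ν lam (ν / 2) (by omega)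
  rw [ffun, hfloor]
  have hdiv : (lam * (ν * (n - ν))) ≤ 2 * ((lam * (ν * (n - ν))) / 2) + 1 := by omega
  have hcast : ((lam * (ν * (n - ν)) : ℕ) : ℤ) = (lam : ℤ) * (ν * (n - ν : ℕ)) := by
    push_cast
    ring
  omega

lemma numB (lam ν k w n : ℕ) (hlam : 1 ≤ lam) (hν : 1 ≤ ν) (hk : 1 ≤ k)
    (hwk : w + k ≤ ν) (hn : 2 * ν * ν + 6 * ν + 12 ≤ n) :
    w * (6 * (lam * (n - 1))) + (3 * k) * (lam * n) + 12 * ν + 18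
      ≤ 6 * (lam * (ν * (n - ν))) := by
  have hνn : ν ≤ n := by nlinarith
  zify [hνn, show 1 ≤ n by omega]
  have h1 : (w : ℤ) ≤ (ν : ℤ) - k := by
    have : (w : ℤ) + k ≤ ν := by exact_mod_cast hwk
    omega
  have hk1 : (1 : ℤ) ≤ (k : ℤ) := by exact_mod_cast hk
  have hl1 : (1 : ℤ) ≤ (lam : ℤ) := by exact_mod_cast hlam
  have hν1 : (1 : ℤ) ≤ (ν : ℤ) := by exact_mod_cast hν
  have hn1 : 2 * (ν : ℤ) * ν + 6 * ν + 12 ≤ (n : ℤ) := by exact_mod_cast hn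
  have hA : (w : ℤ) * (6 * (lam * (n - 1))) ≤ ((ν : ℤ) - k) * (6 * (lam * (n - 1))) := by
    apply mul_le_mul_of_nonneg_right h1
    nlinarith
  have h2 : (0 : ℤ) ≤ (lam : ℤ) * ((n : ℤ) - (2 * ν * ν + 6 * ν + 12)) := by
    apply mul_nonneg (by omega)
    omega
  have h3 : (0 : ℤ) ≤ ((k : ℤ) - 1) * ((lam : ℤ) * ((n : ℤ) - 2)) := by
    apply mul_nonneg (by omega)
    apply mul_nonneg (by omega)
    omega
  have h4 : (0 : ℤ) ≤ ((lam : ℤ) - 1) * ν := mul_nonneg (by omega) (by omega)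
  have h5 : (0 : ℤ) ≤ (lam : ℤ) * ν := mul_nonneg (by omega) (by omega)
  nlinarith [hA, h2, h3, h4, h5]


/-- every 3-multigraph on `n` vertices (`n` large) with maximum codegree
at most `Δ₂` and matching number at most `ν` has at most `f(n, ν, Δ₂)` triples. -/
theorem stmt_0 (Δ₂ ν : ℕ) (hΔ : 0 < Δ₂) (hν : 0 < ν) :
    ∃ N : ℕ, ∀ n : ℕ, N ≤ n →
      ∀ H : Multiset (Finset (Fin n)),
        (∀ t ∈ H, t.card = 3) →
        (∀ x y : Fin n, x ≠ y → codegPair H {x, y} ≤ Δ₂) →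
        (∀ M : Finset (Finset (Fin n)), (∀ t ∈ M, t ∈ H) →
          (∀ t ∈ M, ∀ t' ∈ M, t ≠ t' → Disjoint t t') → M.card ≤ ν) →
        (Multiset.card H : ℤ) ≤ ffun n ν Δ₂ := by
  classical
  refine ⟨1000 * (ν + 1) * (ν + 1), ?_⟩
  intro n hn H h3 hcod hmatch
  have hsq : 1000 * (ν + 1) * (ν + 1) = 1000 * (ν * ν) + 2000 * ν + 1000 := by ring
  have hνν : ν * 1 ≤ ν * ν := Nat.mul_le_mul_left ν hν
  have hn' : 1000 * (ν * ν) + 2000 * ν + 1000 ≤ n := by rw [← hsq]; exact hn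
  have hνn : ν ≤ n := by omega
  have hnbig : 2 * ν * ν + 6 * ν + 12 ≤ n := by
    have : 2 * ν * ν = 2 * (ν * ν) := by ring
    omega
  have hn96 : 96 * (ν + 1) + 12 ≤ n := by omega
  set W0 := Finset.univ.filter
    (fun v : Fin n => Δ₂ * n ≤ 12 * H.countP (fun t => v ∈ t)) with hW0def
  have hdegW0 : ∀ w ∈ W0, ∀ c : ℕ, c ≤ 8 * (ν + 1) →
      Δ₂ * c < H.countP (fun t => w ∈ t) := by
    intro w hw c hc
    have h12 : Δ₂ * n ≤ 12 * H.countP (fun t => w ∈ t) := (Finset.mem_filter.mp hw).2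
    have h1 : 12 * (Δ₂ * c) ≤ Δ₂ * (96 * (ν + 1)) := by
      calc 12 * (Δ₂ * c) = Δ₂ * (12 * c) := by ring
        _ ≤ Δ₂ * (96 * (ν + 1)) := Nat.mul_le_mul_left _ (by omega)
    have h2 : Δ₂ * (96 * (ν + 1)) < Δ₂ * n := by
      apply (mul_lt_mul_iff_right₀ hΔ).mpr
      omega
    omega
  set cand := H.toFinset.powerset.filter (fun M : Finset (Finset (Fin n)) =>
      (∀ t ∈ M, Disjoint t W0) ∧ (∀ t ∈ M, ∀ t' ∈ M, t ≠ t' → Disjoint t t'))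
    with hcanddef
  have hcne : cand.Nonempty := ⟨∅, by simp [hcanddef]⟩
  obtain ⟨M0, hM0c, hM0max⟩ := Finset.exists_max_image cand Finset.card hcne
  rw [hcanddef, Finset.mem_filter, Finset.mem_powerset] at hM0c
  have hM0avoid : ∀ t ∈ M0, Disjoint t W0 := hM0c.2.1
  have hM0disj : ∀ t ∈ M0, ∀ t' ∈ M0, t ≠ t' → Disjoint t t' := hM0c.2.2
  have hM0H : ∀ t ∈ M0, t ∈ H := fun t ht => Multiset.mem_toFinset.mp (hM0c.1 ht)
  have hkν : M0.card ≤ ν := hmatch M0 hM0H hM0disj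
  have hW0card : W0.card ≤ ν := by
    by_contra hc
    push_neg at hc
    obtain ⟨S, hSsub, hScard⟩ := Finset.exists_subset_card_eq
      (show ν + 1 ≤ W0.card by omega)
    obtain ⟨M, hMH, hMd, hMcard⟩ := greedy Δ₂ H h3 hcod S ∅ (by simp) (by simp) (by simp)
      (fun w hw => by
        apply hdegW0 w (hSsub hw)
        simp only [Finset.card_empty, hScard]
        omega)
    have hle := hmatch M hMH hMd
    rw [hMcard, hScard] at hle
    simp only [Finset.card_empty] at hle
    omega
  by_cases hk0 : M0.card = 0
  · -- W0 is a cover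
    have hcover0 : ∀ t ∈ H, ∃ w ∈ W0, w ∈ t := by
      intro t ht
      by_contra hcn
      push_neg at hcn
      have hdisj : Disjoint t W0 := by
        rw [Finset.disjoint_left]
        intro a hat haW
        exact hcn a haW hat
      have hmemc : ({t} : Finset (Finset (Fin n))) ∈ cand := by
        rw [hcanddef, Finset.mem_filter, Finset.mem_powerset]
        refine ⟨by simp [Multiset.mem_toFinset, ht], fun t' ht' => ?_, ?_⟩
        · rw [Finset.mem_singleton] at ht'
          subst ht'
          exact hdisj
        · intro a ha b hb hne
          rw [Finset.mem_singleton] at ha hb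
          subst ha; subst hb
          exact absurd rfl hne
      have hle := hM0max _ hmemc
      rw [Finset.card_singleton, hk0] at hle
      omega
    obtain ⟨W, hW0W, _, hWcard⟩ := Finset.exists_subsuperset_card_eq
      (Finset.subset_univ W0) hW0card
      (by rw [Finset.card_univ, Fintype.card_fin]; exact hνn)
    exact caseA Δ₂ ν hΔ hν hνn H h3 hcod W hWcard (fun t ht => by
      obtain ⟨w, hw, hwt⟩ := hcover0 t ht
      exact ⟨w, hW0W hw, hwt⟩)
  · -- M0 nonempty: low count
    set V0 := M0.biUnion id with hV0def
    have hV0card : V0.card ≤ 3 * M0.card := by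
      calc V0.card ≤ ∑ t ∈ M0, (id t).card := Finset.card_biUnion_le
        _ = 3 * M0.card := by
          rw [Finset.sum_congr rfl (fun t ht => by
            simp only [id_eq]; exact h3 t (hM0H t ht))]
          rw [Finset.sum_const, smul_eq_mul]
          ring
    have hV0W0 : ∀ v ∈ V0, v ∉ W0 := by
      intro v hv hvW
      obtain ⟨t, htM, hvt⟩ := Finset.mem_biUnion.mp hv
      exact (Finset.disjoint_left.mp (hM0avoid t htM)) hvt hvW
    have hW0k : W0.card + M0.card ≤ ν := by
      obtain ⟨M, hMH, hMd, hMcard⟩ := greedy Δ₂ H h3 hcod W0 M0 hM0H hM0disj hM0avoid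
        (fun w hw => hdegW0 w hw _ (by omega))
      have hle := hmatch M hMH hMd
      omega
    have hcover1 : ∀ t ∈ H, ∃ x ∈ W0 ∪ V0, x ∈ t := by
      intro t ht
      by_contra hcn
      push_neg at hcn
      have hdW : Disjoint t W0 := by
        rw [Finset.disjoint_left]
        intro a hat haW
        exact hcn a (Finset.mem_union_left _ haW) hat
      have hdV : Disjoint t V0 := by
        rw [Finset.disjoint_left]
        intro a hat haV
        exact hcn a (Finset.mem_union_right _ haV) hat
      have htM0 : t ∉ M0 := by
        intro hmem
        have hx : ∃ x, x ∈ t := by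
          have := h3 t ht
          have hpos : 0 < t.card := by omega
          obtain ⟨x, hx⟩ := Finset.card_pos.mp hpos
          exact ⟨x, hx⟩
        obtain ⟨x, hxt⟩ := hx
        have hxV : x ∈ V0 := Finset.mem_biUnion.mpr ⟨t, hmem, hxt⟩
        exact (Finset.disjoint_left.mp hdV) hxt hxV
      have hmemc : insert t M0 ∈ cand := by
        rw [hcanddef, Finset.mem_filter, Finset.mem_powerset]
        refine ⟨?_, ?_, ?_⟩
        · rw [Finset.insert_subset_iff]
          exact ⟨Multiset.mem_toFinset.mpr ht, hM0c.1⟩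
        · intro t' ht'
          rcases Finset.mem_insert.mp ht' with rfl | htM
          · exact hdW
          · exact hM0avoid t' htM
        · intro a ha b hb hne
          rcases Finset.mem_insert.mp ha with rfl | haM <;>
            rcases Finset.mem_insert.mp hb with rfl | hbM
          · exact absurd rfl hne
          · exact Finset.disjoint_of_subset_right
              (fun x hx => Finset.mem_biUnion.mpr ⟨b, hbM, hx⟩) hdV
          · exact (Finset.disjoint_of_subset_right
              (fun x hx => Finset.mem_biUnion.mpr ⟨a, haM, hx⟩) hdV).symm
          · exact hM0disj a haM b hbM hne
      have hle := hM0max _ hmemc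
      rw [Finset.card_insert_of_notMem htM0] at hle
      omega
    have hcount : Multiset.card H ≤ ∑ x ∈ W0 ∪ V0, H.countP (fun t => x ∈ t) := by
      calc Multiset.card H = H.countP (fun _ => True) := (Multiset.countP_True).symm
        _ ≤ H.countP (fun t => ∃ x ∈ W0 ∪ V0, x ∈ t) :=
            countP_impl_le H _ _ (fun t ht _ => hcover1 t ht)
        _ ≤ ∑ x ∈ W0 ∪ V0, H.countP (fun t => x ∈ t) := by
            convert countP_exists_le H (W0 ∪ V0) (fun x t => x ∈ t)
    have hWV0disj : Disjoint W0 V0 := Finset.disjoint_right.mpr hV0W0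
    have hb1 : ∑ x ∈ W0, 12 * H.countP (fun t => x ∈ t)
        ≤ W0.card * (6 * (Δ₂ * (n - 1))) := by
      calc ∑ x ∈ W0, 12 * H.countP (fun t => x ∈ t)
          ≤ ∑ _x ∈ W0, 6 * (Δ₂ * (n - 1)) := by
            apply Finset.sum_le_sum
            intro x _
            have := deg_double Δ₂ H h3 hcod x
            omega
        _ = W0.card * (6 * (Δ₂ * (n - 1))) := by
            rw [Finset.sum_const, smul_eq_mul]
    have hb2 : ∑ x ∈ V0, 12 * H.countP (fun t => x ∈ t) ≤ V0.card * (Δ₂ * n) := by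
      calc ∑ x ∈ V0, 12 * H.countP (fun t => x ∈ t) ≤ ∑ _x ∈ V0, Δ₂ * n := by
            apply Finset.sum_le_sum
            intro x hx
            have hnW : x ∉ W0 := hV0W0 x hx
            have : ¬ (Δ₂ * n ≤ 12 * H.countP (fun t => x ∈ t)) := by
              intro hle
              exact hnW (Finset.mem_filter.mpr ⟨Finset.mem_univ x, hle⟩)
            omega
        _ = V0.card * (Δ₂ * n) := by rw [Finset.sum_const, smul_eq_mul]
    have h12 : 12 * Multiset.card H
        ≤ W0.card * (6 * (Δ₂ * (n - 1))) + V0.card * (Δ₂ * n) := by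
      have hmul : 12 * Multiset.card H
          ≤ ∑ x ∈ W0 ∪ V0, 12 * H.countP (fun t => x ∈ t) := by
        rw [← Finset.mul_sum]
        exact Nat.mul_le_mul_left 12 hcount
      rw [Finset.sum_union hWV0disj] at hmul
      omega
    have hnum := numB Δ₂ ν M0.card W0.card n hΔ hν (by omega) hW0k hnbig
    have hV0b : V0.card * (Δ₂ * n) ≤ (3 * M0.card) * (Δ₂ * n) :=
      Nat.mul_le_mul_right _ hV0card
    have hfin : 12 * Multiset.card H + 12 * ν + 18 ≤ 6 * (Δ₂ * (ν * (n - ν))) := by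
      omega
    have hlb := ffun_lb n ν Δ₂ hνn
    have hcast : (12 : ℤ) * (Multiset.card H : ℤ) + 12 * ν + 18
        ≤ 6 * ((Δ₂ : ℤ) * (ν * ((n - ν : ℕ) : ℤ))) := by exact_mod_cast hfin
    linarith
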